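/- Let n ≥ k ≥ 1 be integers and let G be a graph on n vertices satisfying n/k ≤ δ(G) < 2n/k. Let v be a vertex of minimum degree, set c = k·d_v/n, and for a neighbour u of v write x_u = k·x_{uv}/n. Suppose that c − x_u ≥ 1 holds for every u ∈ N_G(v). Then, with f(x) = x·e^{−x} and A_v = {(u,w) : u, w ∈ N_G(v), u ≠ w, uw ∉ E(G)}, (1/2)·e^{5−c} · Σ_{(u,w) ∈ A_v} f(c − x_u)·f(c − x_w) ≤ (n²/k²)·(128e/81). -/

import Mathlib

open Finset

-- (1+s) e^{-s} ≤ 1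
lemma aux_one {s : ℝ} : (1 + s) * Real.exp (-s) ≤ 1 := by
  have h := Real.add_one_le_exp s
  have := mul_le_mul_of_nonneg_right (by linarith : 1 + s ≤ Real.exp s) (Real.exp_pos (-s)).le
  rwa [← Real.exp_add, add_neg_cancel, Real.exp_zero] at this

lemma aux_mono {t c : ℝ} (h1 : 1 ≤ t) (h2 : t ≤ c) :
    c * Real.exp (-c) ≤ t * Real.exp (-t) := by
  have h3 : c ≤ t * (1 + (c - t)) := by nlinarith
  calc c * Real.exp (-c) = c * (Real.exp (-t) * Real.exp (-(c - t))) := by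
        rw [← Real.exp_add]; ring_nf
    _ ≤ t * (1 + (c - t)) * (Real.exp (-t) * Real.exp (-(c - t))) := by
        apply mul_le_mul_of_nonneg_right h3 (by positivity)
    _ = t * Real.exp (-t) * ((1 + (c - t)) * Real.exp (-(c - t))) := by ring
    _ ≤ t * Real.exp (-t) * 1 := by
        apply mul_le_mul_of_nonneg_left aux_one (by positivity)
    _ = t * Real.exp (-t) := by ring

-- s e^{-s} ≤ e^{-1}
lemma aux_fmax (s : ℝ) : s * Real.exp (-s) ≤ Real.exp (-1) := by
  have h := Real.add_one_le_exp (s - 1)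
  have := mul_le_mul_of_nonneg_right (by linarith : s ≤ Real.exp (s - 1)) (Real.exp_pos (-s)).le
  calc s * Real.exp (-s) ≤ Real.exp (s - 1) * Real.exp (-s) := this
    _ = Real.exp (-1) := by rw [← Real.exp_add]; ring_nf

lemma aux_t4 {t : ℝ} (ht : 0 ≤ t) : t ^ 4 * Real.exp (-(3 * t)) ≤ (4 / 3) ^ 4 * Real.exp (-4) := by
  have hs : 0 ≤ 3 * t / 4 := by linarith
  have h1 : (3 * t / 4) * Real.exp (-(3 * t / 4)) ≤ Real.exp (-1) := aux_fmax _
  have h2 : 0 ≤ (3 * t / 4) * Real.exp (-(3 * t / 4)) := by positivity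
  have h3 := pow_le_pow_left₀ h2 h1 4
  have h4 : ((3 * t / 4) * Real.exp (-(3 * t / 4))) ^ 4 = (3 / 4) ^ 4 * (t ^ 4 * Real.exp (-(3 * t))) := by
    rw [mul_pow, ← Real.exp_nat_mul]
    ring_nf
  have h5 : Real.exp (-1) ^ 4 = Real.exp (-4) := by
    rw [← Real.exp_nat_mul]; norm_num
  rw [h4, h5] at h3
  nlinarith [h3]

-- pointwise: (1/2) c t³ e^{5-c-2t} ≤ 128 e / 81
lemma aux_point {t c : ℝ} (h1 : 1 ≤ t) (h2 : t ≤ c) :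
    1 / 2 * (c * (t ^ 3 * Real.exp (5 - c - 2 * t))) ≤ 128 * Real.exp 1 / 81 := by
  have ht0 : (0:ℝ) ≤ t := by linarith
  have key : c * (t ^ 3 * Real.exp (5 - c - 2 * t))
      = Real.exp 5 * ((c * Real.exp (-c)) * (t ^ 3 * Real.exp (-(2 * t)))) := by
    rw [show (5 - c - 2*t) = 5 + (-c) + (-(2*t)) by ring, Real.exp_add, Real.exp_add]
    ring
  have hmono := aux_mono h1 h2
  have h4 := aux_t4 ht0
  have hstep : (c * Real.exp (-c)) * (t ^ 3 * Real.exp (-(2 * t)))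
      ≤ t ^ 4 * Real.exp (-(3 * t)) := by
    have hnn : 0 ≤ t ^ 3 * Real.exp (-(2 * t)) := by positivity
    calc (c * Real.exp (-c)) * (t ^ 3 * Real.exp (-(2 * t)))
        ≤ (t * Real.exp (-t)) * (t ^ 3 * Real.exp (-(2 * t))) :=
          mul_le_mul_of_nonneg_right hmono hnn
      _ = t ^ 4 * Real.exp (-(3 * t)) := by
          rw [show (-(3*t)) = (-t) + (-(2*t)) by ring, Real.exp_add]; ring
  have hfin : (4 / 3:ℝ) ^ 4 * Real.exp (-4) * Real.exp 5 = 256 / 81 * Real.exp 1 := by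
    rw [mul_assoc, ← Real.exp_add]; norm_num
  calc 1 / 2 * (c * (t ^ 3 * Real.exp (5 - c - 2 * t)))
      = 1 / 2 * Real.exp 5 * ((c * Real.exp (-c)) * (t ^ 3 * Real.exp (-(2 * t)))) := by
        rw [key]; ring
    _ ≤ 1 / 2 * Real.exp 5 * (t ^ 4 * Real.exp (-(3 * t))) := by
        apply mul_le_mul_of_nonneg_left hstep (by positivity)
    _ ≤ 1 / 2 * Real.exp 5 * ((4 / 3) ^ 4 * Real.exp (-4)) := by
        apply mul_le_mul_of_nonneg_left h4 (by positivity)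
    _ = 128 * Real.exp 1 / 81 := by
        rw [show 1/2 * Real.exp 5 * ((4/3:ℝ)^4 * Real.exp (-4)) = 1/2 * ((4/3)^4 * Real.exp (-4) * Real.exp 5) by ring, hfin]
        ring

lemma key_sum {n : ℕ} (c m : ℝ) (t : Fin n → ℝ) (S : Finset (Fin n))
    (A : Finset (Fin n × Fin n))
    (hA1 : ∀ p ∈ A, p.1 ∈ S)
    (hsymm : ∀ p ∈ A, p.swap ∈ A)
    (ht1 : ∀ u ∈ S, 1 ≤ t u) (htc : ∀ u ∈ S, t u ≤ c)
    (hm : 0 ≤ m)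
    (hcard : ∀ u ∈ S, (((A.filter fun p => p.1 = u).card : ℝ)) ≤ m * t u)
    (hS : (S.card : ℝ) ≤ m * c) :
    1 / 2 * Real.exp (5 - c) *
      ∑ p ∈ A, (t p.1 * Real.exp (-t p.1)) * (t p.2 * Real.exp (-t p.2))
      ≤ m ^ 2 * (128 * Real.exp 1 / 81) := by
  rcases S.eq_empty_or_nonempty with hSe | ⟨u₀, hu₀⟩
  · have hAe : A = ∅ := by
      rw [Finset.eq_empty_iff_forall_notMem]
      intro p hp
      exact absurd (hA1 p hp) (by simp [hSe])
    rw [hAe]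
    simp only [Finset.sum_empty, mul_zero]
    positivity
  have hc1 : (1:ℝ) ≤ c := le_trans (ht1 u₀ hu₀) (htc u₀ hu₀)
  have hc0 : (0:ℝ) < c := by linarith
  set F : Fin n → ℝ := fun u => t u * Real.exp (-t u) with hF
  -- step 1 : AM-GM + symmetry
  have swapEq : ∑ p ∈ A, F p.2 ^ 2 = ∑ p ∈ A, F p.1 ^ 2 := by
    apply Finset.sum_equiv (Equiv.prodComm (Fin n) (Fin n))
    · intro p
      constructor
      · exact fun hp => hsymm p hp
      · intro hp
        have := hsymm _ hp
        simpa using this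
    · intro p _; rfl
  have step1 : ∑ p ∈ A, F p.1 * F p.2 ≤ ∑ p ∈ A, F p.1 ^ 2 := by
    have h : ∑ p ∈ A, F p.1 * F p.2 ≤ ∑ p ∈ A, (F p.1 ^ 2 + F p.2 ^ 2) / 2 := by
      apply Finset.sum_le_sum
      intro p _
      nlinarith [sq_nonneg (F p.1 - F p.2)]
    calc ∑ p ∈ A, F p.1 * F p.2 ≤ ∑ p ∈ A, (F p.1 ^ 2 + F p.2 ^ 2) / 2 := h
      _ = (∑ p ∈ A, F p.1 ^ 2 + ∑ p ∈ A, F p.2 ^ 2) / 2 := by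
          rw [← Finset.sum_add_distrib, ← Finset.sum_div]
      _ = ∑ p ∈ A, F p.1 ^ 2 := by rw [swapEq]; ring
  -- step 2 : fiberwise
  have step2 : ∑ p ∈ A, F p.1 ^ 2 ≤ ∑ u ∈ S, (m * t u) * F u ^ 2 := by
    rw [← Finset.sum_fiberwise_of_maps_to hA1 (fun p => F p.1 ^ 2)]
    apply Finset.sum_le_sum
    intro u hu
    have hinner : ∑ p ∈ A.filter (fun p => p.1 = u), F p.1 ^ 2
        = ((A.filter fun p => p.1 = u).card : ℝ) * F u ^ 2 := by
      rw [Finset.sum_congr rfl (fun p hp => by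
        rw [(Finset.mem_filter.1 hp).2]), Finset.sum_const, nsmul_eq_mul]
    rw [hinner]
    exact mul_le_mul_of_nonneg_right (hcard u hu) (sq_nonneg _)
  have hsum_nonneg : 0 ≤ (1:ℝ)/2 * Real.exp (5 - c) := by positivity
  calc 1 / 2 * Real.exp (5 - c) * ∑ p ∈ A, (t p.1 * Real.exp (-t p.1)) * (t p.2 * Real.exp (-t p.2))
      = 1 / 2 * Real.exp (5 - c) * ∑ p ∈ A, F p.1 * F p.2 := rfl
    _ ≤ 1 / 2 * Real.exp (5 - c) * ∑ u ∈ S, (m * t u) * F u ^ 2 := by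
        apply mul_le_mul_of_nonneg_left (le_trans step1 step2) hsum_nonneg
    _ = ∑ u ∈ S, 1 / 2 * Real.exp (5 - c) * ((m * t u) * F u ^ 2) := by
        rw [Finset.mul_sum]
    _ ≤ ∑ u ∈ S, m * (128 * Real.exp 1 / 81 / c) := by
        apply Finset.sum_le_sum
        intro u hu
        have hid : 1 / 2 * Real.exp (5 - c) * ((m * t u) * F u ^ 2)
            = m * (1 / 2 * (t u ^ 3 * Real.exp (5 - c - 2 * t u))) := by
          have : Real.exp (5 - c - 2 * t u) = Real.exp (5 - c) * (Real.exp (-t u) * Real.exp (-t u)) := by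
            rw [← Real.exp_add, ← Real.exp_add]; ring_nf
          rw [hF]; simp only []
          rw [this]; ring
        rw [hid]
        apply mul_le_mul_of_nonneg_left _ hm
        rw [le_div_iff₀ hc0]
        have := aux_point (ht1 u hu) (htc u hu)
        calc 1 / 2 * (t u ^ 3 * Real.exp (5 - c - 2 * t u)) * c
            = 1 / 2 * (c * (t u ^ 3 * Real.exp (5 - c - 2 * t u))) := by ring
          _ ≤ 128 * Real.exp 1 / 81 := this
    _ = (S.card : ℝ) * (m * (128 * Real.exp 1 / 81 / c)) := by
        rw [Finset.sum_const, nsmul_eq_mul]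
    _ ≤ (m * c) * (m * (128 * Real.exp 1 / 81 / c)) := by
        apply mul_le_mul_of_nonneg_right hS
        positivity
    _ = m ^ 2 * (128 * Real.exp 1 / 81) := by
        field_simp

theorem program3 (n k : ℕ) (hk : 1 ≤ k) (hkn : k ≤ n)
    (G : SimpleGraph (Fin n)) [DecidableRel G.Adj]
    (hδ₁ : (n : ℝ) / (k : ℝ) ≤ (G.minDegree : ℝ))
    (hδ₂ : (G.minDegree : ℝ) < 2 * (n : ℝ) / (k : ℝ))
    (v : Fin n) (hv : G.degree v = G.minDegree)
    (hx : ∀ u : Fin n, G.Adj v u →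
      1 ≤ (k : ℝ) * (G.degree v : ℝ) / (n : ℝ) -
        (k : ℝ) * ((G.neighborFinset u ∩ G.neighborFinset v).card : ℝ) / (n : ℝ)) :
    1 / 2 * Real.exp (5 - (k : ℝ) * (G.degree v : ℝ) / (n : ℝ)) *
      ∑ p ∈ Finset.univ.filter (fun p : Fin n × Fin n =>
          G.Adj v p.1 ∧ G.Adj v p.2 ∧ p.1 ≠ p.2 ∧ ¬ G.Adj p.1 p.2),
        ((((k : ℝ) * (G.degree v : ℝ) / (n : ℝ) -
            (k : ℝ) * ((G.neighborFinset p.1 ∩ G.neighborFinset v).card : ℝ) / (n : ℝ)) *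
          Real.exp (-((k : ℝ) * (G.degree v : ℝ) / (n : ℝ) -
            (k : ℝ) * ((G.neighborFinset p.1 ∩ G.neighborFinset v).card : ℝ) / (n : ℝ)))) *
         (((k : ℝ) * (G.degree v : ℝ) / (n : ℝ) -
            (k : ℝ) * ((G.neighborFinset p.2 ∩ G.neighborFinset v).card : ℝ) / (n : ℝ)) *
          Real.exp (-((k : ℝ) * (G.degree v : ℝ) / (n : ℝ) -
            (k : ℝ) * ((G.neighborFinset p.2 ∩ G.neighborFinset v).card : ℝ) / (n : ℝ))))) ≤
      (n : ℝ) ^ 2 / (k : ℝ) ^ 2 * (128 * Real.exp 1 / 81) := by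
  have hn : 1 ≤ n := le_trans hk hkn
  have hk0 : (0:ℝ) < (k:ℝ) := by exact_mod_cast hk
  have hn0 : (0:ℝ) < (n:ℝ) := by exact_mod_cast hn
  set c : ℝ := (k : ℝ) * (G.degree v : ℝ) / (n : ℝ) with hc
  set t : Fin n → ℝ := fun u => c -
      (k : ℝ) * ((G.neighborFinset u ∩ G.neighborFinset v).card : ℝ) / (n : ℝ) with ht
  set A : Finset (Fin n × Fin n) := Finset.univ.filter (fun p : Fin n × Fin n =>
      G.Adj v p.1 ∧ G.Adj v p.2 ∧ p.1 ≠ p.2 ∧ ¬ G.Adj p.1 p.2) with hA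
  have memA : ∀ p : Fin n × Fin n, p ∈ A ↔
      (G.Adj v p.1 ∧ G.Adj v p.2 ∧ p.1 ≠ p.2 ∧ ¬ G.Adj p.1 p.2) := by
    intro p; rw [hA, Finset.mem_filter]; simp
  have hA1 : ∀ p ∈ A, p.1 ∈ G.neighborFinset v := by
    intro p hp
    exact (G.mem_neighborFinset v p.1).2 ((memA p).1 hp).1
  have hsymm : ∀ p ∈ A, p.swap ∈ A := by
    intro p hp
    obtain ⟨h1, h2, h3, h4⟩ := (memA p).1 hp
    exact (memA p.swap).2 ⟨h2, h1, fun h => h3 h.symm, fun h => h4 h.symm⟩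
  have ht1 : ∀ u ∈ G.neighborFinset v, 1 ≤ t u := by
    intro u hu
    exact hx u ((G.mem_neighborFinset v u).1 hu)
  have htc : ∀ u ∈ G.neighborFinset v, t u ≤ c := by
    intro u _
    have : (0:ℝ) ≤ (k : ℝ) * ((G.neighborFinset u ∩ G.neighborFinset v).card : ℝ) / (n : ℝ) := by
      positivity
    simp only [ht]
    linarith
  have hm : (0:ℝ) ≤ (n:ℝ) / (k:ℝ) := by positivity
  have hcard : ∀ u ∈ G.neighborFinset v,
      (((A.filter fun p => p.1 = u).card : ℝ)) ≤ (n:ℝ)/(k:ℝ) * t u := by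
    intro u hu
    have hmt : (n:ℝ)/(k:ℝ) * t u
        = (G.degree v : ℝ) - ((G.neighborFinset u ∩ G.neighborFinset v).card : ℝ) := by
      simp only [ht, hc]
      field_simp
    have hsub : ((A.filter fun p => p.1 = u).card : ℕ)
        ≤ (G.neighborFinset v \ G.neighborFinset u).card := by
      apply Finset.card_le_card_of_injOn (fun p => p.2)
      · intro p hp
        obtain ⟨hpA, hpu⟩ := Finset.mem_filter.1 hp
        obtain ⟨h1, h2, h3, h4⟩ := (memA p).1 hpA
        simp only [Finset.mem_coe]
        rw [Finset.mem_sdiff]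
        refine ⟨(G.mem_neighborFinset v p.2).2 h2, fun h => h4 ?_⟩
        rw [hpu]
        exact (G.mem_neighborFinset u p.2).1 h
      · intro p hp q hq hpq
        have hp1 := (Finset.mem_coe.1 hp); have hq1 := (Finset.mem_coe.1 hq)
        have : p.1 = u := (Finset.mem_filter.1 hp1).2
        have : q.1 = u := (Finset.mem_filter.1 hq1).2
        exact Prod.ext (by rw [(Finset.mem_filter.1 hp1).2, (Finset.mem_filter.1 hq1).2]) hpq
    have hcount : ((G.neighborFinset v \ G.neighborFinset u).card : ℝ)
        = (G.degree v : ℝ) - ((G.neighborFinset u ∩ G.neighborFinset v).card : ℝ) := by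
      have h := Finset.card_sdiff_add_card_inter (G.neighborFinset v) (G.neighborFinset u)
      have h2 : (G.neighborFinset v ∩ G.neighborFinset u) = (G.neighborFinset u ∩ G.neighborFinset v) := Finset.inter_comm _ _
      rw [h2] at h
      have h3 : ((G.neighborFinset v \ G.neighborFinset u).card : ℝ)
          + ((G.neighborFinset u ∩ G.neighborFinset v).card : ℝ) = ((G.neighborFinset v).card : ℝ) := by
        exact_mod_cast congrArg (Nat.cast : ℕ → ℝ) h
      rw [G.card_neighborFinset_eq_degree] at h3
      linarith
    rw [hmt, ← hcount]
    exact_mod_cast hsub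
  have hS : ((G.neighborFinset v).card : ℝ) ≤ (n:ℝ)/(k:ℝ) * c := by
    rw [G.card_neighborFinset_eq_degree, hc]
    have : (n:ℝ)/(k:ℝ) * ((k : ℝ) * (G.degree v : ℝ) / (n : ℝ)) = (G.degree v : ℝ) := by
      field_simp
    rw [this]
  have := key_sum c ((n:ℝ)/(k:ℝ)) t (G.neighborFinset v) A hA1 hsymm ht1 htc hm hcard hS
  rw [div_pow] at this
  exact this
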